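/- Fix real numbers x₁, …, x_n and let 𝔽_n(x) = (1/n) ∑_{i=1}^n 1{x_i ≤ x} denote their empirical CDF. Then, as m → ∞, H_m(𝔽_n)(x) → 𝔽_n(x) for every x ∉ {x₁, …, x_n}, and moreover ‖H_m(𝔽_n) − 𝔽_n‖_p → 0 for every p ∈ [1, ∞). -/

import Mathlib

open MeasureTheory Filter Set
open scoped BoundedContinuousFunction ProbabilityTheory

noncomputable section

/-- Density of the Beta(j, m-j+1) distribution. -/
def betaDens (m j : ℕ) (u : ℝ) : ℝ :=
  (m : ℝ) * ((m - 1).choose (j - 1) : ℝ) * u ^ (j - 1) * (1 - u) ^ (m - j)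

/-- Quantile function (left-continuous generalized inverse). -/
def quantile (G : ℝ → ℝ) (p : ℝ) : ℝ :=
  sInf {x : ℝ | p ≤ G x}

/-- `G` is a cumulative distribution function on ℝ. -/
structure IsCDF (G : ℝ → ℝ) : Prop where
  mono : Monotone G
  rightCont : ∀ x, ContinuousWithinAt G (Ici x) x
  tendsto_atBot : Tendsto G atBot (nhds 0)
  tendsto_atTop : Tendsto G atTop (nhds 1)

/-- `G` has finite mean: its quantile function is integrable on (0,1). -/
def HasFiniteMean (G : ℝ → ℝ) : Prop :=
  IntegrableOn (fun u => quantile G u) (Ioo (0:ℝ) 1)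

/-- Expected j-th order statistic from a sample of size m drawn from G. -/
def muOS (m j : ℕ) (G : ℝ → ℝ) : ℝ :=
  ∫ u in Ioo (0:ℝ) 1, quantile G u * betaDens m j u

/-- The Hoeffding CDF operator `H_m`. -/
def hoeffCDF (m : ℕ) (G : ℝ → ℝ) (x : ℝ) : ℝ :=
  (m : ℝ)⁻¹ * ∑ j ∈ Finset.Icc 1 m, if muOS m j G ≤ x then (1:ℝ) else 0

/-- The quantile-Hoeffding operator `I_m`. -/
def quantHoeff (m : ℕ) (h : ℝ → ℝ) (u : ℝ) : ℝ :=
  ∑ j ∈ Finset.Icc 1 m,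
    (∫ t in Ioo (0:ℝ) 1, h t * betaDens m j t) *
      (if u ∈ Ioc (((j : ℝ) - 1) / m) ((j : ℝ) / m) then (1:ℝ) else 0)

/-- Empirical CDF of the reals `x 0, ..., x (n-1)`. -/
def ecdf (n : ℕ) (x : ℕ → ℝ) (t : ℝ) : ℝ :=
  (n : ℝ)⁻¹ * ∑ i ∈ Finset.range n, if x i ≤ t then (1:ℝ) else 0

/-- Empirical CDF of the random sample `X 0, ..., X (n-1)`. -/
def empCDF {Ω : Type*} (X : ℕ → Ω → ℝ) (n : ℕ) (ω : Ω) : ℝ → ℝ :=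
  fun t => (n : ℝ)⁻¹ * ∑ i ∈ Finset.range n, if X i ω ≤ t then (1:ℝ) else 0



set_option maxHeartbeats 1000000

lemma contPB (a b : ℕ) : Continuous (fun u : ℝ => u^a * (1-u)^b) := by fun_prop

lemma I_int : ∀ (b a : ℕ), ∫ u in (0:ℝ)..1, u^a * (1-u)^b
    = (a.factorial * b.factorial : ℝ) / (a+b+1).factorial := by
  intro b
  induction b with
  | zero =>
    intro a
    have h3 : ((a+1).factorial : ℝ) = (a+1) * a.factorial := by
      rw [Nat.factorial_succ]; push_cast; ring
    have p1 : (a.factorial : ℝ) ≠ 0 := by positivity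
    simp [integral_pow, h3]
    field_simp
  | succ b ih =>
    intro a
    have h1 : ∀ u ∈ uIcc (0:ℝ) 1, (fun u : ℝ => u^a * (1-u)^(b+1)) u
        = (fun u : ℝ => u^a * (1-u)^b - u^(a+1) * (1-u)^b) u := by
      intro u _; simp only; ring
    rw [intervalIntegral.integral_congr h1]
    rw [intervalIntegral.integral_sub ((contPB a b).intervalIntegrable 0 1)
      ((contPB (a+1) b).intervalIntegrable 0 1)]
    rw [ih a, ih (a+1)]
    have h2 : ((a+b+1+1).factorial : ℝ) = (a+b+2) * (a+b+1).factorial := by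
      rw [show a+b+1+1 = (a+b+1)+1 by ring, Nat.factorial_succ]; push_cast; ring
    have h3 : ((a+1).factorial : ℝ) = (a+1) * a.factorial := by
      rw [Nat.factorial_succ]; push_cast; ring
    have h4 : ((b+1).factorial : ℝ) = (b+1) * b.factorial := by
      rw [Nat.factorial_succ]; push_cast; ring
    have h5 : (a+1+b+1 : ℕ) = a+b+1+1 := by ring
    have h6 : (a+(b+1)+1 : ℕ) = a+b+1+1 := by ring
    rw [h5, h6, h2, h3, h4]
    have p1 : ((a+b+1).factorial : ℝ) ≠ 0 := by positivity
    have p2 : (a+b+2 : ℝ) ≠ 0 := by positivity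
    field_simp
    ring

lemma I_int' (b a : ℕ) : ∫ u in Ioo (0:ℝ) 1, u^a * (1-u)^b
    = (a.factorial * b.factorial : ℝ) / (a+b+1).factorial := by
  rw [← MeasureTheory.integral_Ioc_eq_integral_Ioo, ← intervalIntegral.integral_of_le zero_le_one]
  exact I_int b a

lemma betaDens_eq (a b : ℕ) (u : ℝ) :
    betaDens (a+b+1) (a+1) u = ((a+b+1 : ℕ) : ℝ) * ((a+b).choose a : ℝ) * (u^a * (1-u)^b) := by
  unfold betaDens
  have h1 : a+b+1-1 = a+b := by omega
  have h2 : a+1-1 = a := by omega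
  have h3 : a+b+1-(a+1) = b := by omega
  rw [h1, h2, h3]; ring

lemma beta_moment (a b k : ℕ) :
    ∫ u in Ioo (0:ℝ) 1, u^k * betaDens (a+b+1) (a+1) u
      = ((a+b+1 : ℕ) : ℝ) * ((a+b).choose a : ℝ)
        * (((a+k).factorial * b.factorial : ℝ) / (a+k+b+1).factorial) := by
  have : ∀ u ∈ Ioo (0:ℝ) 1, u^k * betaDens (a+b+1) (a+1) u
      = ((a+b+1 : ℕ) : ℝ) * ((a+b).choose a : ℝ) * (u^(a+k) * (1-u)^b) := by
    intro u _; rw [betaDens_eq]; ring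
  rw [setIntegral_congr_fun measurableSet_Ioo this, MeasureTheory.integral_const_mul, I_int']

lemma choose_fact (a b : ℕ) :
    ((a+b).choose a : ℝ) * a.factorial * b.factorial = (a+b).factorial := by
  have := Nat.choose_mul_factorial_mul_factorial (Nat.le_add_right a b)
  rw [Nat.add_sub_cancel_left] at this
  exact_mod_cast congrArg (Nat.cast : ℕ → ℝ) this

lemma fact_succ (n : ℕ) : ((n+1).factorial : ℝ) = (n+1) * n.factorial := by
  rw [Nat.factorial_succ]; push_cast; ring

lemma B1 (a b : ℕ) : ∫ u in Ioo (0:ℝ) 1, betaDens (a+b+1) (a+1) u = 1 := by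
  have h := beta_moment a b 0
  simp only [pow_zero, one_mul, Nat.add_zero] at h
  rw [h]
  have h2 : (a+b+1 : ℕ) = (a+b)+1 := rfl
  rw [h2, fact_succ]
  have := choose_fact a b
  have p1 : ((a+b).factorial : ℝ) ≠ 0 := by positivity
  have p2 : (a.factorial : ℝ) ≠ 0 := by positivity
  have p3 : (b.factorial : ℝ) ≠ 0 := by positivity
  have p4 : ((a:ℝ)+b+1) ≠ 0 := by positivity
  push_cast
  field_simp
  nlinarith [this]

lemma B2 (a b : ℕ) : ∫ u in Ioo (0:ℝ) 1, u * betaDens (a+b+1) (a+1) u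
    = ((a:ℝ)+1) / ((a:ℝ)+b+2) := by
  have h := beta_moment a b 1
  simp only [pow_one] at h
  rw [h]
  have h2 : (a+1+b+1 : ℕ) = ((a+b)+1)+1 := by ring
  have h3 : (a+1 : ℕ) = a+1 := rfl
  rw [h2, fact_succ, fact_succ, fact_succ]
  have := choose_fact a b
  have p1 : ((a+b).factorial : ℝ) ≠ 0 := by positivity
  have p2 : (a.factorial : ℝ) ≠ 0 := by positivity
  have p3 : (b.factorial : ℝ) ≠ 0 := by positivity
  have p4 : ((a:ℝ)+b+1) ≠ 0 := by positivity
  have p5 : ((a:ℝ)+b+2) ≠ 0 := by positivity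
  push_cast
  field_simp
  linear_combination ((a:ℝ)+b+2) * this

lemma B3 (a b : ℕ) : ∫ u in Ioo (0:ℝ) 1, u^2 * betaDens (a+b+1) (a+1) u
    = (((a:ℝ)+1) * ((a:ℝ)+2)) / (((a:ℝ)+b+2) * ((a:ℝ)+b+3)) := by
  have h := beta_moment a b 2
  rw [h]
  have h2 : (a+2+b+1 : ℕ) = (((a+b)+1)+1)+1 := by ring
  have h3 : (a+2 : ℕ) = (a+1)+1 := rfl
  rw [h2, h3, fact_succ, fact_succ, fact_succ, fact_succ, fact_succ]
  have := choose_fact a b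
  have p1 : ((a+b).factorial : ℝ) ≠ 0 := by positivity
  have p2 : (a.factorial : ℝ) ≠ 0 := by positivity
  have p3 : (b.factorial : ℝ) ≠ 0 := by positivity
  have p4 : ((a:ℝ)+b+1) ≠ 0 := by positivity
  have p5 : ((a:ℝ)+b+2) ≠ 0 := by positivity
  have p6 : ((a:ℝ)+b+3) ≠ 0 := by positivity
  push_cast
  field_simp
  linear_combination (((a:ℝ)+2)*((a:ℝ)+b+2)*((a:ℝ)+b+3)) * this

lemma contBD (m j : ℕ) : Continuous (betaDens m j) := by unfold betaDens; fun_prop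

lemma contIntOn {f : ℝ → ℝ} (h : Continuous f) : IntegrableOn f (Ioo (0:ℝ) 1) :=
  (h.integrableOn_Icc (a := 0) (b := 1)).mono_set Ioo_subset_Icc_self

lemma bdNonneg (m j : ℕ) {u : ℝ} (hu : u ∈ Ioo (0:ℝ) 1) : 0 ≤ betaDens m j u := by
  unfold betaDens
  have h1 : 0 < u := hu.1
  have h2 : (0:ℝ) < 1 - u := by have := hu.2; linarith
  positivity

lemma var_le (a b : ℕ) :
    ∫ u in Ioo (0:ℝ) 1, (u - ((a:ℝ)+1)/((a:ℝ)+b+2))^2 * betaDens (a+b+1) (a+1) u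
      ≤ 1/((a:ℝ)+b+1) := by
  set c : ℝ := ((a:ℝ)+1)/((a:ℝ)+b+2) with hc
  have key : ∀ u : ℝ, (u - c)^2 * betaDens (a+b+1) (a+1) u
      = u^2 * betaDens (a+b+1) (a+1) u
        + (-(2*c)) * (u * betaDens (a+b+1) (a+1) u)
        + c^2 * betaDens (a+b+1) (a+1) u := by
    intro u; ring
  have i1 : IntegrableOn (fun u : ℝ => u^2 * betaDens (a+b+1) (a+1) u) (Ioo (0:ℝ) 1) :=
    contIntOn (by have := contBD (a+b+1) (a+1); fun_prop)
  have i2 : IntegrableOn (fun u : ℝ => (-(2*c)) * (u * betaDens (a+b+1) (a+1) u)) (Ioo (0:ℝ) 1) :=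
    contIntOn (by have := contBD (a+b+1) (a+1); fun_prop)
  have i3 : IntegrableOn (fun u : ℝ => c^2 * betaDens (a+b+1) (a+1) u) (Ioo (0:ℝ) 1) :=
    contIntOn (by have := contBD (a+b+1) (a+1); fun_prop)
  rw [show (fun u : ℝ => (u - c)^2 * betaDens (a+b+1) (a+1) u) = _ from funext key]
  have i12 : IntegrableOn (fun u : ℝ => u^2 * betaDens (a+b+1) (a+1) u
      + (-(2*c)) * (u * betaDens (a+b+1) (a+1) u)) (Ioo (0:ℝ) 1) := i1.add i2
  rw [MeasureTheory.integral_add i12 i3, MeasureTheory.integral_add i1 i2,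
    MeasureTheory.integral_const_mul, MeasureTheory.integral_const_mul, B1, B2, B3]
  have pA : (0:ℝ) < (a:ℝ)+b+1 := by positivity
  have pB : (0:ℝ) < (a:ℝ)+b+2 := by positivity
  have pC : (0:ℝ) < (a:ℝ)+b+3 := by positivity
  rw [hc]
  have expand : ((a:ℝ) + 1) * ((a:ℝ) + 2) / (((a:ℝ) + (b:ℝ) + 2) * ((a:ℝ) + (b:ℝ) + 3)) +
        -(2 * (((a:ℝ) + 1) / ((a:ℝ) + (b:ℝ) + 2))) * (((a:ℝ) + 1) / ((a:ℝ) + (b:ℝ) + 2)) +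
      (((a:ℝ) + 1) / ((a:ℝ) + (b:ℝ) + 2)) ^ 2 * 1
      = (((a:ℝ)+1) * ((b:ℝ)+1)) / ((((a:ℝ)+(b:ℝ)+2))^2 * ((a:ℝ)+(b:ℝ)+3)) := by
    field_simp
    ring
  rw [expand, div_le_div_iff₀ (by positivity) pA]
  nlinarith [sq_nonneg ((a:ℝ) - (b:ℝ)), pA, pB, pC, mul_pos pA pB, mul_pos pB pC]

lemma hoeff_mono (m : ℕ) (G : ℝ → ℝ) : Monotone (hoeffCDF m G) := by
  intro s t hst
  unfold hoeffCDF
  apply mul_le_mul_of_nonneg_left _ (by positivity)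
  apply Finset.sum_le_sum
  intro j _
  by_cases h : muOS m j G ≤ s
  · rw [if_pos h, if_pos (h.trans hst)]
  · rw [if_neg h]; split <;> norm_num

lemma hoeff_nonneg (m : ℕ) (G : ℝ → ℝ) (t : ℝ) : 0 ≤ hoeffCDF m G t := by
  unfold hoeffCDF
  apply mul_nonneg (by positivity)
  apply Finset.sum_nonneg
  intro j _; split <;> norm_num

lemma hoeff_le_one (m : ℕ) (G : ℝ → ℝ) (t : ℝ) : hoeffCDF m G t ≤ 1 := by
  unfold hoeffCDF
  rcases Nat.eq_zero_or_pos m with h | h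
  · simp [h]
  have hsum : ∑ j ∈ Finset.Icc 1 m, (if muOS m j G ≤ t then (1:ℝ) else 0) ≤ m := by
    calc ∑ j ∈ Finset.Icc 1 m, (if muOS m j G ≤ t then (1:ℝ) else 0)
        ≤ ∑ j ∈ Finset.Icc 1 m, (1:ℝ) := by
          apply Finset.sum_le_sum; intro j _; split <;> norm_num
      _ = m := by rw [Finset.sum_const, Nat.card_Icc]; simp
  rw [inv_mul_le_iff₀ (by exact_mod_cast h), mul_one]
  exact hsum


section ECDF
variable (n : ℕ) (x : ℕ → ℝ) (hn : 0 < n)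
include hn

def sampMin : ℝ := (Finset.range n).inf' (by simp [Finset.nonempty_range_iff]; omega) x
def sampMax : ℝ := (Finset.range n).sup' (by simp [Finset.nonempty_range_iff]; omega) x

lemma sampMin_le {i : ℕ} (hi : i < n) : sampMin n x hn ≤ x i :=
  Finset.inf'_le _ (Finset.mem_range.2 hi)

lemma le_sampMax {i : ℕ} (hi : i < n) : x i ≤ sampMax n x hn :=
  Finset.le_sup' _ (Finset.mem_range.2 hi)

lemma ecdf_mono : Monotone (ecdf n x) := by
  intro s t hst
  unfold ecdf
  apply mul_le_mul_of_nonneg_left _ (by positivity)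
  apply Finset.sum_le_sum
  intro i _
  by_cases h : x i ≤ s
  · simp [h, h.trans hst]
  · simp [h]; split <;> norm_num

lemma ecdf_nonneg (t : ℝ) : 0 ≤ ecdf n x t := by
  unfold ecdf
  apply mul_nonneg (by positivity)
  apply Finset.sum_nonneg
  intro i _; split <;> norm_num

lemma ecdf_le_one (t : ℝ) : ecdf n x t ≤ 1 := by
  unfold ecdf
  rcases Nat.eq_zero_or_pos n with h | h
  · simp [h]
  have : ∑ i ∈ Finset.range n, (if x i ≤ t then (1:ℝ) else 0) ≤ n := by
    calc ∑ i ∈ Finset.range n, (if x i ≤ t then (1:ℝ) else 0)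
        ≤ ∑ i ∈ Finset.range n, (1:ℝ) := by
          apply Finset.sum_le_sum; intro i _; split <;> norm_num
      _ = n := by simp
  rw [inv_mul_le_iff₀ (by positivity), mul_one]
  exact this

lemma ecdf_eq_zero {t : ℝ} (ht : t < sampMin n x hn) : ecdf n x t = 0 := by
  unfold ecdf
  have : ∀ i ∈ Finset.range n, (if x i ≤ t then (1:ℝ) else 0) = 0 := by
    intro i hi
    have := sampMin_le n x hn (Finset.mem_range.1 hi)
    rw [if_neg (by linarith)]
  rw [Finset.sum_congr rfl this]; simp

lemma ecdf_eq_one {t : ℝ} (ht : sampMax n x hn ≤ t) : ecdf n x t = 1 := by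
  unfold ecdf
  have : ∀ i ∈ Finset.range n, (if x i ≤ t then (1:ℝ) else 0) = 1 := by
    intro i hi
    have := le_sampMax n x hn (Finset.mem_range.1 hi)
    rw [if_pos (by linarith)]
  rw [Finset.sum_congr rfl this]
  simp
  rw [inv_mul_cancel₀ (by positivity)]

lemma S_subset {u : ℝ} (hu : 0 < u) : {s : ℝ | u ≤ ecdf n x s} ⊆ Ici (sampMin n x hn) := by
  intro s hs
  by_contra h
  simp only [mem_Ici, not_le] at h
  have := ecdf_eq_zero n x hn h
  simp only [mem_setOf_eq, this] at hs
  linarith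

lemma S_bddBelow {u : ℝ} (hu : 0 < u) : BddBelow {s : ℝ | u ≤ ecdf n x s} :=
  ⟨sampMin n x hn, S_subset n x hn hu⟩

lemma S_nonempty {u : ℝ} (hu : u ≤ 1) : {s : ℝ | u ≤ ecdf n x s}.Nonempty :=
  ⟨sampMax n x hn, by simp only [mem_setOf_eq, ecdf_eq_one n x hn le_rfl]; exact hu⟩

lemma ecdf_locally_const_right (c : ℝ) :
    ∃ ε > 0, ∀ r, c ≤ r → r < c + ε → ecdf n x r = ecdf n x c := by
  classical
  set T := (Finset.range n).filter (fun i => c < x i) with hT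
  by_cases h : T.Nonempty
  · refine ⟨T.inf' h (fun i => x i - c), ?_, ?_⟩
    · rw [gt_iff_lt, Finset.lt_inf'_iff]
      intro i hi
      rw [hT, Finset.mem_filter] at hi
      linarith [hi.2]
    · intro r hcr hrε
      unfold ecdf
      congr 1
      apply Finset.sum_congr rfl
      intro i hi
      by_cases hxc : x i ≤ c
      · rw [if_pos (hxc.trans hcr), if_pos hxc]
      · push_neg at hxc
        have hiT : i ∈ T := by rw [hT, Finset.mem_filter]; exact ⟨hi, hxc⟩
        have := Finset.inf'_le (fun i => x i - c) hiT
        rw [if_neg (by linarith), if_neg (by linarith)]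
  · refine ⟨1, one_pos, ?_⟩
    intro r hcr hrε
    have hall : ∀ i ∈ Finset.range n, x i ≤ c := by
      intro i hi
      by_contra hc
      push_neg at hc
      exact h ⟨i, Finset.mem_filter.2 ⟨hi, hc⟩⟩
    unfold ecdf
    congr 1
    apply Finset.sum_congr rfl
    intro i hi
    rw [if_pos ((hall i hi).trans hcr), if_pos (hall i hi)]

lemma quantile_ecdf_le_iff {u : ℝ} (hu0 : 0 < u) (hu1 : u ≤ 1) (s : ℝ) :
    quantile (ecdf n x) u ≤ s ↔ u ≤ ecdf n x s := by
  constructor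
  · intro h
    set c := quantile (ecdf n x) u with hcdef
    obtain ⟨ε, hε, hconst⟩ := ecdf_locally_const_right n x hn c
    have hlt : sInf {s : ℝ | u ≤ ecdf n x s} < c + ε := by
      have : quantile (ecdf n x) u < c + ε := by linarith
      unfold quantile at this; exact this
    obtain ⟨r, hrS, hrlt⟩ := (csInf_lt_iff (S_bddBelow n x hn hu0) (S_nonempty n x hn hu1)).1 hlt
    have hcr : c ≤ r := csInf_le (S_bddBelow n x hn hu0) hrS
    have : u ≤ ecdf n x c := by
      rw [← hconst r hcr hrlt]; exact hrS
    exact this.trans (ecdf_mono n x hn h)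
  · intro h
    exact csInf_le (S_bddBelow n x hn hu0) h

lemma sampMin_le_quantile {u : ℝ} (hu0 : 0 < u) (hu1 : u ≤ 1) :
    sampMin n x hn ≤ quantile (ecdf n x) u :=
  le_csInf (S_nonempty n x hn hu1) (fun r hr => S_subset n x hn hu0 hr)

lemma quantile_le_sampMax {u : ℝ} (hu0 : 0 < u) (hu1 : u ≤ 1) :
    quantile (ecdf n x) u ≤ sampMax n x hn :=
  csInf_le (S_bddBelow n x hn hu0) (by simp only [mem_setOf_eq, ecdf_eq_one n x hn le_rfl]; exact hu1)

lemma quantile_ecdf_monoOn : MonotoneOn (quantile (ecdf n x)) (Ioc (0:ℝ) 1) := by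
  intro u hu v hv huv
  apply csInf_le_csInf (S_bddBelow n x hn hu.1) (S_nonempty n x hn hv.2)
  intro r hr
  exact le_trans huv hr


def indLe (r : ℝ) (j : ℕ) : ℝ := if (j:ℝ) ≤ r then 1 else 0

omit hn in
lemma indLe_nonneg (r : ℝ) (j : ℕ) : 0 ≤ indLe r j := by
  unfold indLe; split <;> norm_num

omit hn in
lemma sum_indicator_le (m : ℕ) (r : ℝ) (hr : 0 ≤ r) :
    ∑ j ∈ Finset.Icc 1 m, indLe r j ≤ r := by
  classical
  unfold indLe
  rw [← Finset.sum_filter]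
  have hsub : (Finset.Icc 1 m).filter (fun j : ℕ => (j:ℝ) ≤ r) ⊆ Finset.Icc 1 ⌊r⌋₊ := by
    intro j hj
    rw [Finset.mem_filter, Finset.mem_Icc] at hj
    rw [Finset.mem_Icc]
    exact ⟨hj.1.1, Nat.le_floor hj.2⟩
  rw [Finset.sum_const, nsmul_eq_mul, mul_one]
  calc (((Finset.Icc 1 m).filter (fun j : ℕ => (j:ℝ) ≤ r)).card : ℝ)
      ≤ ((Finset.Icc 1 ⌊r⌋₊).card : ℝ) := by
        exact_mod_cast Finset.card_le_card hsub
    _ = (⌊r⌋₊ : ℝ) := by rw [Nat.card_Icc]; simp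
    _ ≤ r := Nat.floor_le hr

omit hn in
lemma le_sum_indicator (m : ℕ) (r : ℝ) (hrm : r ≤ (m:ℝ)) :
    r - 1 ≤ ∑ j ∈ Finset.Icc 1 m, indLe r j := by
  classical
  by_cases hr0 : r < 1
  · have : (0:ℝ) ≤ ∑ j ∈ Finset.Icc 1 m, indLe r j :=
      Finset.sum_nonneg (fun j _ => indLe_nonneg r j)
    linarith
  · push_neg at hr0
    have hr0' : (0:ℝ) ≤ r := by linarith
    unfold indLe
    rw [← Finset.sum_filter]
    have hsub : Finset.Icc 1 ⌊r⌋₊ ⊆ (Finset.Icc 1 m).filter (fun j : ℕ => (j:ℝ) ≤ r) := by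
      intro j hj
      rw [Finset.mem_Icc] at hj
      rw [Finset.mem_filter, Finset.mem_Icc]
      have hjr : (j:ℝ) ≤ r := (Nat.le_floor_iff hr0').1 hj.2
      refine ⟨⟨hj.1, ?_⟩, hjr⟩
      exact_mod_cast hjr.trans hrm
    rw [Finset.sum_const, nsmul_eq_mul, mul_one]
    calc r - 1 ≤ (⌊r⌋₊ : ℝ) := le_of_lt (Nat.sub_one_lt_floor r)
      _ = ((Finset.Icc 1 ⌊r⌋₊).card : ℝ) := by rw [Nat.card_Icc]; simp
      _ ≤ _ := by exact_mod_cast Finset.card_le_card hsub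


lemma intOn_q_mul (g : ℝ → ℝ) (hg : Continuous g) :
    IntegrableOn (fun u => quantile (ecdf n x) u * g u) (Ioo (0:ℝ) 1) := by
  have hq_ae : AEMeasurable (quantile (ecdf n x)) (volume.restrict (Ioo (0:ℝ) 1)) :=
    aemeasurable_restrict_of_monotoneOn measurableSet_Ioo
      ((quantile_ecdf_monoOn n x hn).mono Ioo_subset_Ioc_self)
  obtain ⟨C, hC⟩ : ∃ C, ∀ u ∈ Icc (0:ℝ) 1, ‖g u‖ ≤ C :=
    isCompact_Icc.exists_bound_of_continuousOn hg.continuousOn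
  refine ⟨(hq_ae.mul hg.measurable.aemeasurable).aestronglyMeasurable, ?_⟩
  apply HasFiniteIntegral.restrict_of_bounded
    (C := (|sampMin n x hn| + |sampMax n x hn|) * |C|) measure_Ioo_lt_top
  rw [ae_restrict_iff' measurableSet_Ioo]
  filter_upwards with u hu
  have h1 := sampMin_le_quantile n x hn hu.1 (le_of_lt hu.2)
  have h2 := quantile_le_sampMax n x hn hu.1 (le_of_lt hu.2)
  have h3 : ‖g u‖ ≤ |C| := le_trans (hC u (Ioo_subset_Icc_self hu)) (le_abs_self C)
  have h4 : |quantile (ecdf n x) u| ≤ |sampMin n x hn| + |sampMax n x hn| := by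
    rw [abs_le]
    constructor
    · calc -(|sampMin n x hn| + |sampMax n x hn|) ≤ -|sampMin n x hn| := by
            have := abs_nonneg (sampMax n x hn); linarith
        _ ≤ sampMin n x hn := neg_abs_le _
        _ ≤ _ := h1
    · calc quantile (ecdf n x) u ≤ sampMax n x hn := h2
        _ ≤ |sampMax n x hn| := le_abs_self _
        _ ≤ _ := by have := abs_nonneg (sampMin n x hn); linarith
  calc ‖quantile (ecdf n x) u * g u‖ = |quantile (ecdf n x) u| * ‖g u‖ := by
        rw [norm_mul]; rfl
    _ ≤ (|sampMin n x hn| + |sampMax n x hn|) * |C| :=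
        mul_le_mul h4 h3 (norm_nonneg _) (by positivity)

lemma intOn_q_sub_mul (t : ℝ) (g : ℝ → ℝ) (hg : Continuous g) :
    IntegrableOn (fun u => (quantile (ecdf n x) u - t) * g u) (Ioo (0:ℝ) 1) := by
  have h1 := intOn_q_mul n x hn g hg
  have h2 : IntegrableOn (fun u => t * g u) (Ioo (0:ℝ) 1) := contIntOn (by fun_prop)
  have e : (fun u => (quantile (ecdf n x) u - t) * g u)
      = fun u => quantile (ecdf n x) u * g u - t * g u := funext (fun u => by ring)
  rw [e]
  exact h1.sub h2

lemma muOS_sub_eq (m j : ℕ) (hj : 1 ≤ j) (hjm : j ≤ m) (t : ℝ) :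
    muOS m j (ecdf n x) - t
      = ∫ u in Ioo (0:ℝ) 1, (quantile (ecdf n x) u - t) * betaDens m j u := by
  obtain ⟨a, b, rfl, rfl⟩ : ∃ a b : ℕ, j = a + 1 ∧ m = a + b + 1 :=
    ⟨j - 1, m - j, by omega, by omega⟩
  have e : (fun u => (quantile (ecdf n x) u - t) * betaDens (a+b+1) (a+1) u)
      = fun u => quantile (ecdf n x) u * betaDens (a+b+1) (a+1) u
        - t * betaDens (a+b+1) (a+1) u := funext (fun u => by ring)
  rw [e, MeasureTheory.integral_sub (intOn_q_mul n x hn _ (contBD _ _))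
    (contIntOn (by have := contBD (a+b+1) (a+1); fun_prop))]
  have : ∫ u in Ioo (0:ℝ) 1, t * betaDens (a+b+1) (a+1) u = t := by
    rw [MeasureTheory.integral_const_mul, B1, mul_one]
  rw [this]
  rfl

lemma muOS_le_t (m j : ℕ) (hj1 : 1 ≤ j) (hjm : j ≤ m) (t c δ M ε : ℝ)
    (hδ : 0 < δ) (hε : 0 < ε)
    (hq1 : ∀ u ∈ Ioo (0:ℝ) 1, u ≤ c → quantile (ecdf n x) u ≤ t - δ/2)
    (hM : ∀ u ∈ Ioo (0:ℝ) 1, |quantile (ecdf n x) u - t| ≤ M)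
    (hmean : (j:ℝ)/((m:ℝ)+1) ≤ c - ε)
    (hbig : (δ/2 + M) * (ε⁻¹^2 * (1/(m:ℝ))) < δ/2) :
    muOS m j (ecdf n x) ≤ t := by
  obtain ⟨a, b, rfl, rfl⟩ : ∃ a b : ℕ, j = a + 1 ∧ m = a + b + 1 :=
    ⟨j - 1, m - j, by omega, by omega⟩
  set f := betaDens (a+b+1) (a+1) with hf
  set q := quantile (ecdf n x) with hq
  set c₀ : ℝ := ((a:ℝ)+1)/((a:ℝ)+b+2) with hc₀
  have hmean' : c₀ ≤ c - ε := by
    have : ((a:ℝ)+1)/((a:ℝ)+b+2) = ((a+1 : ℕ):ℝ)/(((a+b+1 : ℕ):ℝ)+1) := by push_cast; ring_nf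
    rw [hc₀, this]; exact hmean
  set S1 : Set ℝ := Ioo (0:ℝ) 1 ∩ Iic c with hS1
  set S2 : Set ℝ := Ioo (0:ℝ) 1 ∩ Ioi c with hS2
  have hsplitEq : S1 ∪ S2 = Ioo (0:ℝ) 1 := by
    rw [hS1, hS2, ← inter_union_distrib_left, Iic_union_Ioi, inter_univ]
  have hdisj : Disjoint S1 S2 := by
    rw [Set.disjoint_left]
    rintro u ⟨_, h1⟩ ⟨_, h2⟩
    exact absurd (show u ≤ c from h1) (not_le.2 h2)
  have hS1m : MeasurableSet S1 := measurableSet_Ioo.inter measurableSet_Iic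
  have hS2m : MeasurableSet S2 := measurableSet_Ioo.inter measurableSet_Ioi
  have ig : IntegrableOn (fun u => (q u - t) * f u) (Ioo (0:ℝ) 1) :=
    intOn_q_sub_mul n x hn t f (contBD _ _)
  have iff' : IntegrableOn f (Ioo (0:ℝ) 1) := contIntOn (contBD _ _)
  have iconst : ∀ r : ℝ, IntegrableOn (fun u => r * f u) (Ioo (0:ℝ) 1) :=
    fun r => contIntOn (by have := contBD (a+b+1) (a+1); fun_prop)
  have key : muOS (a+b+1) (a+1) (ecdf n x) - t = (∫ u in S1, (q u - t) * f u)
      + ∫ u in S2, (q u - t) * f u := by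
    rw [muOS_sub_eq n x hn _ _ hj1 hjm t,
      ← MeasureTheory.setIntegral_union hdisj hS2m
        (ig.mono_set (hsplitEq ▸ subset_union_left))
        (ig.mono_set (hsplitEq ▸ subset_union_right)), hsplitEq]
  have keyf : (1:ℝ) = (∫ u in S1, f u) + ∫ u in S2, f u := by
    rw [← MeasureTheory.setIntegral_union hdisj hS2m
        (iff'.mono_set (hsplitEq ▸ subset_union_left))
        (iff'.mono_set (hsplitEq ▸ subset_union_right)), hsplitEq, hf, B1]
  set P1 : ℝ := ∫ u in S1, f u with hP1
  set P2 : ℝ := ∫ u in S2, f u with hP2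
  have hP2nn : 0 ≤ P2 :=
    setIntegral_nonneg hS2m (fun u hu => bdNonneg _ _ hu.1)
  have bound1 : (∫ u in S1, (q u - t) * f u) ≤ (-(δ/2)) * P1 := by
    rw [hP1, ← MeasureTheory.integral_const_mul]
    apply setIntegral_mono_on (ig.mono_set (hsplitEq ▸ subset_union_left))
      ((iconst (-(δ/2))).mono_set (hsplitEq ▸ subset_union_left)) hS1m
    intro u hu
    have h1 : q u - t ≤ -(δ/2) := by
      have := hq1 u hu.1 hu.2; linarith
    exact mul_le_mul_of_nonneg_right h1 (bdNonneg _ _ hu.1)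
  have bound2 : (∫ u in S2, (q u - t) * f u) ≤ M * P2 := by
    rw [hP2, ← MeasureTheory.integral_const_mul]
    apply setIntegral_mono_on (ig.mono_set (hsplitEq ▸ subset_union_right))
      ((iconst M).mono_set (hsplitEq ▸ subset_union_right)) hS2m
    intro u hu
    have h1 : q u - t ≤ M := le_trans (le_abs_self _) (hM u hu.1)
    exact mul_le_mul_of_nonneg_right h1 (bdNonneg _ _ hu.1)
  have cheb : P2 ≤ ε⁻¹^2 * (1/((a:ℝ)+b+1)) := by
    have step1 : P2 ≤ ∫ u in S2, ε⁻¹^2 * ((u - c₀)^2 * f u) := by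
      rw [hP2]
      apply setIntegral_mono_on (iff'.mono_set (hsplitEq ▸ subset_union_right))
        ((contIntOn (by have := contBD (a+b+1) (a+1); fun_prop)).mono_set
          (hsplitEq ▸ subset_union_right)) hS2m
      intro u hu
      have h1 : ε ≤ u - c₀ := by
        have : c < u := hu.2
        linarith [hmean']
      have h2 : ε^2 ≤ (u - c₀)^2 := by nlinarith
      have h3 : (1:ℝ) ≤ ε⁻¹^2 * (u - c₀)^2 := by
        calc (1:ℝ) = ε⁻¹^2 * ε^2 := by field_simp
          _ ≤ ε⁻¹^2 * (u - c₀)^2 := mul_le_mul_of_nonneg_left h2 (by positivity)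
      calc f u = 1 * f u := (one_mul _).symm
        _ ≤ (ε⁻¹^2 * (u - c₀)^2) * f u :=
            mul_le_mul_of_nonneg_right h3 (bdNonneg _ _ hu.1)
        _ = ε⁻¹^2 * ((u - c₀)^2 * f u) := by ring
    have step2 : (∫ u in S2, ε⁻¹^2 * ((u - c₀)^2 * f u))
        ≤ ∫ u in Ioo (0:ℝ) 1, ε⁻¹^2 * ((u - c₀)^2 * f u) := by
      apply setIntegral_mono_set (contIntOn (by have := contBD (a+b+1) (a+1); fun_prop))
      · rw [EventuallyLE, ae_restrict_iff' measurableSet_Ioo]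
        filter_upwards with u hu
        have := bdNonneg (a+b+1) (a+1) hu
        positivity
      · exact HasSubset.Subset.eventuallyLE (hsplitEq ▸ subset_union_right)
    have step3 : (∫ u in Ioo (0:ℝ) 1, ε⁻¹^2 * ((u - c₀)^2 * f u))
        ≤ ε⁻¹^2 * (1/((a:ℝ)+b+1)) := by
      rw [MeasureTheory.integral_const_mul]
      apply mul_le_mul_of_nonneg_left _ (by positivity)
      rw [hc₀, hf]
      exact var_le a b
    linarith
  have hMnn : 0 ≤ M := le_trans (abs_nonneg _) (hM (1/2) (by norm_num))
  have hm_cast : ((a:ℝ)+b+1) = ((a+b+1 : ℕ):ℝ) := by push_cast; ring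
  rw [hm_cast] at cheb
  have hP1eq : P1 = 1 - P2 := by linarith
  have : muOS (a+b+1) (a+1) (ecdf n x) - t ≤ -(δ/2) + (δ/2 + M) * P2 := by
    rw [key]
    calc (∫ u in S1, (q u - t) * f u) + ∫ u in S2, (q u - t) * f u
        ≤ (-(δ/2)) * P1 + M * P2 := add_le_add bound1 bound2
      _ = -(δ/2) + (δ/2 + M) * P2 := by rw [hP1eq]; ring
  have hfin : (δ/2 + M) * P2 < δ/2 := by
    calc (δ/2 + M) * P2 ≤ (δ/2 + M) * (ε⁻¹^2 * (1/((a+b+1:ℕ):ℝ))) :=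
          mul_le_mul_of_nonneg_left cheb (by positivity)
      _ < δ/2 := hbig
  linarith

lemma t_lt_muOS (m j : ℕ) (hj1 : 1 ≤ j) (hjm : j ≤ m) (t c δ M ε : ℝ)
    (hδ : 0 < δ) (hε : 0 < ε)
    (hq2 : ∀ u ∈ Ioo (0:ℝ) 1, c < u → t + δ/2 ≤ quantile (ecdf n x) u)
    (hM : ∀ u ∈ Ioo (0:ℝ) 1, |quantile (ecdf n x) u - t| ≤ M)
    (hmean : c + ε ≤ (j:ℝ)/((m:ℝ)+1))
    (hbig : (δ/2 + M) * (ε⁻¹^2 * (1/(m:ℝ))) < δ/2) :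
    t < muOS m j (ecdf n x) := by
  obtain ⟨a, b, rfl, rfl⟩ : ∃ a b : ℕ, j = a + 1 ∧ m = a + b + 1 :=
    ⟨j - 1, m - j, by omega, by omega⟩
  set f := betaDens (a+b+1) (a+1) with hf
  set q := quantile (ecdf n x) with hq
  set c₀ : ℝ := ((a:ℝ)+1)/((a:ℝ)+b+2) with hc₀
  have hmean' : c + ε ≤ c₀ := by
    have : ((a:ℝ)+1)/((a:ℝ)+b+2) = ((a+1 : ℕ):ℝ)/(((a+b+1 : ℕ):ℝ)+1) := by push_cast; ring_nf
    rw [hc₀, this]; exact hmean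
  set S1 : Set ℝ := Ioo (0:ℝ) 1 ∩ Iic c with hS1
  set S2 : Set ℝ := Ioo (0:ℝ) 1 ∩ Ioi c with hS2
  have hsplitEq : S1 ∪ S2 = Ioo (0:ℝ) 1 := by
    rw [hS1, hS2, ← inter_union_distrib_left, Iic_union_Ioi, inter_univ]
  have hdisj : Disjoint S1 S2 := by
    rw [Set.disjoint_left]
    rintro u ⟨_, h1⟩ ⟨_, h2⟩
    exact absurd (show u ≤ c from h1) (not_le.2 h2)
  have hS1m : MeasurableSet S1 := measurableSet_Ioo.inter measurableSet_Iic
  have hS2m : MeasurableSet S2 := measurableSet_Ioo.inter measurableSet_Ioi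
  have ig : IntegrableOn (fun u => (q u - t) * f u) (Ioo (0:ℝ) 1) :=
    intOn_q_sub_mul n x hn t f (contBD _ _)
  have iff' : IntegrableOn f (Ioo (0:ℝ) 1) := contIntOn (contBD _ _)
  have iconst : ∀ r : ℝ, IntegrableOn (fun u => r * f u) (Ioo (0:ℝ) 1) :=
    fun r => contIntOn (by have := contBD (a+b+1) (a+1); fun_prop)
  have key : muOS (a+b+1) (a+1) (ecdf n x) - t = (∫ u in S1, (q u - t) * f u)
      + ∫ u in S2, (q u - t) * f u := by
    rw [muOS_sub_eq n x hn _ _ hj1 hjm t,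
      ← MeasureTheory.setIntegral_union hdisj hS2m
        (ig.mono_set (hsplitEq ▸ subset_union_left))
        (ig.mono_set (hsplitEq ▸ subset_union_right)), hsplitEq]
  have keyf : (1:ℝ) = (∫ u in S1, f u) + ∫ u in S2, f u := by
    rw [← MeasureTheory.setIntegral_union hdisj hS2m
        (iff'.mono_set (hsplitEq ▸ subset_union_left))
        (iff'.mono_set (hsplitEq ▸ subset_union_right)), hsplitEq, hf, B1]
  set P1 : ℝ := ∫ u in S1, f u with hP1
  set P2 : ℝ := ∫ u in S2, f u with hP2
  have hP1nn : 0 ≤ P1 :=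
    setIntegral_nonneg hS1m (fun u hu => bdNonneg _ _ hu.1)
  have bound1 : (-M) * P1 ≤ ∫ u in S1, (q u - t) * f u := by
    rw [hP1, ← MeasureTheory.integral_const_mul]
    apply setIntegral_mono_on ((iconst (-M)).mono_set (hsplitEq ▸ subset_union_left))
      (ig.mono_set (hsplitEq ▸ subset_union_left)) hS1m
    intro u hu
    have h1 : -M ≤ q u - t := neg_le_of_abs_le (hM u hu.1)
    exact mul_le_mul_of_nonneg_right h1 (bdNonneg _ _ hu.1)
  have bound2 : (δ/2) * P2 ≤ ∫ u in S2, (q u - t) * f u := by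
    rw [hP2, ← MeasureTheory.integral_const_mul]
    apply setIntegral_mono_on ((iconst (δ/2)).mono_set (hsplitEq ▸ subset_union_right))
      (ig.mono_set (hsplitEq ▸ subset_union_right)) hS2m
    intro u hu
    have h1 : δ/2 ≤ q u - t := by have := hq2 u hu.1 hu.2; linarith
    exact mul_le_mul_of_nonneg_right h1 (bdNonneg _ _ hu.1)
  have cheb : P1 ≤ ε⁻¹^2 * (1/((a:ℝ)+b+1)) := by
    have step1 : P1 ≤ ∫ u in S1, ε⁻¹^2 * ((u - c₀)^2 * f u) := by
      rw [hP1]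
      apply setIntegral_mono_on (iff'.mono_set (hsplitEq ▸ subset_union_left))
        ((contIntOn (by have := contBD (a+b+1) (a+1); fun_prop)).mono_set
          (hsplitEq ▸ subset_union_left)) hS1m
      intro u hu
      have h1 : ε ≤ c₀ - u := by
        have : u ≤ c := hu.2
        linarith [hmean']
      have h2 : ε^2 ≤ (u - c₀)^2 := by nlinarith
      have h3 : (1:ℝ) ≤ ε⁻¹^2 * (u - c₀)^2 := by
        calc (1:ℝ) = ε⁻¹^2 * ε^2 := by field_simp
          _ ≤ ε⁻¹^2 * (u - c₀)^2 := mul_le_mul_of_nonneg_left h2 (by positivity)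
      calc f u = 1 * f u := (one_mul _).symm
        _ ≤ (ε⁻¹^2 * (u - c₀)^2) * f u :=
            mul_le_mul_of_nonneg_right h3 (bdNonneg _ _ hu.1)
        _ = ε⁻¹^2 * ((u - c₀)^2 * f u) := by ring
    have step2 : (∫ u in S1, ε⁻¹^2 * ((u - c₀)^2 * f u))
        ≤ ∫ u in Ioo (0:ℝ) 1, ε⁻¹^2 * ((u - c₀)^2 * f u) := by
      apply setIntegral_mono_set (contIntOn (by have := contBD (a+b+1) (a+1); fun_prop))
      · rw [EventuallyLE, ae_restrict_iff' measurableSet_Ioo]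
        filter_upwards with u hu
        have := bdNonneg (a+b+1) (a+1) hu
        positivity
      · exact HasSubset.Subset.eventuallyLE (hsplitEq ▸ subset_union_left)
    have step3 : (∫ u in Ioo (0:ℝ) 1, ε⁻¹^2 * ((u - c₀)^2 * f u))
        ≤ ε⁻¹^2 * (1/((a:ℝ)+b+1)) := by
      rw [MeasureTheory.integral_const_mul]
      apply mul_le_mul_of_nonneg_left _ (by positivity)
      rw [hc₀, hf]
      exact var_le a b
    linarith
  have hMnn : 0 ≤ M := le_trans (abs_nonneg _) (hM (1/2) (by norm_num))
  have hm_cast : ((a:ℝ)+b+1) = ((a+b+1 : ℕ):ℝ) := by push_cast; ring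
  rw [hm_cast] at cheb
  have hP2eq : P2 = 1 - P1 := by linarith
  have : δ/2 - (δ/2 + M) * P1 ≤ muOS (a+b+1) (a+1) (ecdf n x) - t := by
    rw [key]
    calc δ/2 - (δ/2 + M) * P1 = (-M) * P1 + (δ/2) * P2 := by rw [hP2eq]; ring
      _ ≤ _ := add_le_add bound1 bound2
  have hfin : (δ/2 + M) * P1 < δ/2 := by
    calc (δ/2 + M) * P1 ≤ (δ/2 + M) * (ε⁻¹^2 * (1/((a+b+1:ℕ):ℝ))) :=
          mul_le_mul_of_nonneg_left cheb (by positivity)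
      _ < δ/2 := hbig
  linarith


include hn

lemma hoeff_pointwise (t : ℝ) (ht : ∀ i < n, x i ≠ t) :
    Tendsto (fun m : ℕ => hoeffCDF m (ecdf n x) t) atTop (nhds (ecdf n x t)) := by
  classical
  set c : ℝ := ecdf n x t with hcdef
  have hc0 : 0 ≤ c := ecdf_nonneg n x hn t
  have hc1 : c ≤ 1 := ecdf_le_one n x hn t
  have hne : (Finset.range n).Nonempty := by simp [Finset.nonempty_range_iff]; omega
  set δ : ℝ := (Finset.range n).inf' hne (fun i => |x i - t|) with hδdef
  have hδ : 0 < δ := by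
    rw [hδdef, Finset.lt_inf'_iff]
    intro i hi
    have : x i ≠ t := ht i (Finset.mem_range.1 hi)
    simpa [sub_eq_zero, abs_pos] using this
  have hδle : ∀ i < n, δ ≤ |x i - t| := fun i hi =>
    Finset.inf'_le _ (Finset.mem_range.2 hi)
  have hFm : ecdf n x (t - δ/2) = c := by
    rw [hcdef]
    unfold ecdf
    congr 1
    apply Finset.sum_congr rfl
    intro i hi
    have hi' := Finset.mem_range.1 hi
    by_cases h : x i ≤ t
    · have hlt : x i < t := lt_of_le_of_ne h (ht i hi')
      have : δ ≤ t - x i := by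
        have := hδle i hi'
        rwa [abs_of_neg (by linarith : x i - t < 0), neg_sub] at this
      rw [if_pos (by linarith), if_pos h]
    · push_neg at h
      rw [if_neg (by push_neg; linarith), if_neg (by push_neg; exact h)]
  have hFp : ecdf n x (t + δ/2) = c := by
    rw [hcdef]
    unfold ecdf
    congr 1
    apply Finset.sum_congr rfl
    intro i hi
    have hi' := Finset.mem_range.1 hi
    by_cases h : x i ≤ t
    · rw [if_pos (by linarith), if_pos h]
    · push_neg at h
      have : δ ≤ x i - t := by
        have := hδle i hi'
        rwa [abs_of_pos (by linarith : 0 < x i - t)] at this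
      rw [if_neg (by push_neg; linarith), if_neg (by push_neg; exact h)]
  have hq1 : ∀ u ∈ Ioo (0:ℝ) 1, u ≤ c → quantile (ecdf n x) u ≤ t - δ/2 := by
    intro u hu huc
    rw [quantile_ecdf_le_iff n x hn hu.1 (le_of_lt hu.2), hFm]
    exact huc
  have hq2 : ∀ u ∈ Ioo (0:ℝ) 1, c < u → t + δ/2 ≤ quantile (ecdf n x) u := by
    intro u hu huc
    by_contra h
    push_neg at h
    have := (quantile_ecdf_le_iff n x hn hu.1 (le_of_lt hu.2) (t + δ/2)).1 (le_of_lt h)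
    rw [hFp] at this
    linarith
  set M : ℝ := |sampMin n x hn - t| + |sampMax n x hn - t| with hMdef
  have hM : ∀ u ∈ Ioo (0:ℝ) 1, |quantile (ecdf n x) u - t| ≤ M := by
    intro u hu
    have h1 := sampMin_le_quantile n x hn hu.1 (le_of_lt hu.2)
    have h2 := quantile_le_sampMax n x hn hu.1 (le_of_lt hu.2)
    rw [hMdef, abs_le]
    constructor
    · have := neg_abs_le (sampMin n x hn - t)
      have h0 := abs_nonneg (sampMax n x hn - t)
      linarith
    · have := le_abs_self (sampMax n x hn - t)
      have h0 := abs_nonneg (sampMin n x hn - t)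
      linarith
  rw [Metric.tendsto_atTop]
  intro ε' hε'
  set ε : ℝ := min (ε'/4) 1 with hεdef
  have hε : 0 < ε := by rw [hεdef]; positivity
  have hε1 : ε ≤ 1 := min_le_right _ _
  have hε4 : ε ≤ ε'/4 := min_le_left _ _
  have e1 : ∀ᶠ m : ℕ in atTop, (δ/2 + M) * (ε⁻¹^2 * (1/(m:ℝ))) < δ/2 := by
    have htend : Tendsto (fun m : ℕ => (δ/2 + M) * (ε⁻¹^2 * (1/(m:ℝ)))) atTop
        (nhds ((δ/2 + M) * (ε⁻¹^2 * 0))) :=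
      (tendsto_one_div_atTop_nhds_zero_nat.const_mul _).const_mul _
    have hlt : (δ/2 + M) * (ε⁻¹^2 * 0) < δ/2 := by simp; positivity
    exact htend.eventually_lt_const hlt
  have e2 : ∀ᶠ m : ℕ in atTop, 1 ≤ ε * ((m:ℝ)+1) := by
    have htend : Tendsto (fun m : ℕ => ε * ((m:ℝ)+1)) atTop atTop :=
      Tendsto.const_mul_atTop hε
        (tendsto_atTop_add_const_right _ _ tendsto_natCast_atTop_atTop)
    exact htend.eventually_ge_atTop 1
  have e3 : ∀ᶠ m : ℕ in atTop, 2 < ε'/2 * (m:ℝ) := by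
    have htend : Tendsto (fun m : ℕ => ε'/2 * (m:ℝ)) atTop atTop :=
      Tendsto.const_mul_atTop (by positivity) tendsto_natCast_atTop_atTop
    exact htend.eventually_gt_atTop 2
  have e4 : ∀ᶠ m : ℕ in atTop, 1 ≤ m := eventually_ge_atTop 1
  obtain ⟨N, hN⟩ := eventually_atTop.1 (e1.and (e2.and (e3.and e4)))
  refine ⟨N, fun m hm => ?_⟩
  obtain ⟨h1, h2, h3, h4⟩ := hN m hm
  have hm0 : (0:ℝ) < m := by exact_mod_cast h4
  have hm1 : (0:ℝ) < (m:ℝ)+1 := by linarith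
  set K : ℝ := ∑ j ∈ Finset.Icc 1 m, (if muOS m j (ecdf n x) ≤ t then (1:ℝ) else 0) with hK
  have low : (c - ε) * ((m:ℝ)+1) - 1 ≤ K := by
    have term : ∀ j ∈ Finset.Icc 1 m,
        indLe ((c - ε) * ((m:ℝ)+1)) j
          ≤ (if muOS m j (ecdf n x) ≤ t then (1:ℝ) else 0) := by
      intro j hj
      obtain ⟨hj1, hjm⟩ := Finset.mem_Icc.1 hj
      unfold indLe
      by_cases hcond : (j:ℝ) ≤ (c - ε) * ((m:ℝ)+1)
      · rw [if_pos hcond, if_pos]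
        apply muOS_le_t n x hn m j hj1 hjm t c δ M ε hδ hε hq1 hM _ h1
        rw [div_le_iff₀ hm1]
        linarith
      · rw [if_neg hcond]
        split <;> norm_num
    have hrm : (c - ε) * ((m:ℝ)+1) ≤ (m:ℝ) := by nlinarith [h2]
    calc (c - ε) * ((m:ℝ)+1) - 1
        ≤ ∑ j ∈ Finset.Icc 1 m, indLe ((c - ε) * ((m:ℝ)+1)) j :=
          le_sum_indicator m _ hrm
      _ ≤ K := Finset.sum_le_sum term
  have high : K ≤ (c + ε) * ((m:ℝ)+1) := by
    have term : ∀ j ∈ Finset.Icc 1 m,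
        (if muOS m j (ecdf n x) ≤ t then (1:ℝ) else 0)
          ≤ indLe ((c + ε) * ((m:ℝ)+1)) j := by
      intro j hj
      obtain ⟨hj1, hjm⟩ := Finset.mem_Icc.1 hj
      unfold indLe
      by_cases hcond : (j:ℝ) ≤ (c + ε) * ((m:ℝ)+1)
      · rw [if_pos hcond]
        split <;> norm_num
      · push_neg at hcond
        rw [if_neg (not_le.2 hcond), if_neg]
        push_neg
        apply t_lt_muOS n x hn m j hj1 hjm t c δ M ε hδ hε hq2 hM _ h1
        rw [le_div_iff₀ hm1]
        linarith
    calc K ≤ ∑ j ∈ Finset.Icc 1 m, indLe ((c + ε) * ((m:ℝ)+1)) j :=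
          Finset.sum_le_sum term
      _ ≤ (c + ε) * ((m:ℝ)+1) := sum_indicator_le m _ (by positivity)
  have hHK : hoeffCDF m (ecdf n x) t = (m:ℝ)⁻¹ * K := rfl
  rw [Real.dist_eq, hHK]
  have hKfm : (m:ℝ)⁻¹ * K = K / m := by rw [inv_mul_eq_div]
  rw [hKfm, abs_lt]
  have hε'm : 4 < ε' * (m:ℝ) := by nlinarith [h3]
  have hεm : ε * (m:ℝ) ≤ ε'/4 * (m:ℝ) := mul_le_mul_of_nonneg_right hε4 (le_of_lt hm0)
  have hlow' : c - ε' < K / m := by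
    rw [lt_div_iff₀ hm0]
    nlinarith [low, hεm, hε'm, hc0, hc1, hε1, hε4, hε', hm0]
  have hhigh' : K / m < c + ε' := by
    rw [div_lt_iff₀ hm0]
    nlinarith [high, hεm, hε'm, hc0, hc1, hε1, hε4, hε', hm0]
  constructor
  · linarith
  · linarith

lemma sampMin_le_muOS (m j : ℕ) (hj : 1 ≤ j) (hjm : j ≤ m) :
    sampMin n x hn ≤ muOS m j (ecdf n x) := by
  have h := muOS_sub_eq n x hn m j hj hjm (sampMin n x hn)
  have hpos : 0 ≤ ∫ u in Ioo (0:ℝ) 1,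
      (quantile (ecdf n x) u - sampMin n x hn) * betaDens m j u := by
    apply setIntegral_nonneg measurableSet_Ioo
    intro u hu
    apply mul_nonneg _ (bdNonneg m j hu)
    have := sampMin_le_quantile n x hn hu.1 (le_of_lt hu.2)
    linarith
  linarith

lemma muOS_le_sampMax (m j : ℕ) (hj : 1 ≤ j) (hjm : j ≤ m) :
    muOS m j (ecdf n x) ≤ sampMax n x hn := by
  have h := muOS_sub_eq n x hn m j hj hjm (sampMax n x hn)
  have hneg : (∫ u in Ioo (0:ℝ) 1,
      (quantile (ecdf n x) u - sampMax n x hn) * betaDens m j u) ≤ 0 := by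
    apply setIntegral_nonpos measurableSet_Ioo
    intro u hu
    apply mul_nonpos_of_nonpos_of_nonneg _ (bdNonneg m j hu)
    have := quantile_le_sampMax n x hn hu.1 (le_of_lt hu.2)
    linarith
  linarith

lemma hoeff_ecdf_zero (m : ℕ) {t : ℝ} (ht : t < sampMin n x hn) :
    hoeffCDF m (ecdf n x) t = 0 := by
  unfold hoeffCDF
  rw [Finset.sum_eq_zero, mul_zero]
  intro j hj
  obtain ⟨hj1, hjm⟩ := Finset.mem_Icc.1 hj
  rw [if_neg]
  push_neg
  exact lt_of_lt_of_le ht (sampMin_le_muOS n x hn m j hj1 hjm)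

lemma hoeff_ecdf_one (m : ℕ) (hm : 1 ≤ m) {t : ℝ} (ht : sampMax n x hn ≤ t) :
    hoeffCDF m (ecdf n x) t = 1 := by
  unfold hoeffCDF
  have : ∀ j ∈ Finset.Icc 1 m, (if muOS m j (ecdf n x) ≤ t then (1:ℝ) else 0) = 1 := by
    intro j hj
    obtain ⟨hj1, hjm⟩ := Finset.mem_Icc.1 hj
    rw [if_pos ((muOS_le_sampMax n x hn m j hj1 hjm).trans ht)]
  rw [Finset.sum_congr rfl this, Finset.sum_const, Nat.card_Icc]
  simp
  rw [inv_mul_cancel₀ (Nat.cast_ne_zero.2 (by omega))]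

lemma hoeff_lp (p : ℝ) (hp : 1 ≤ p) :
    Tendsto (fun m : ℕ => ∫ t : ℝ, |hoeffCDF m (ecdf n x) t - ecdf n x t| ^ p)
      atTop (nhds 0) := by
  rw [← tendsto_add_atTop_iff_nat 1]
  have hp0 : 0 < p := by linarith
  set A := sampMin n x hn with hA
  set B := sampMax n x hn with hB
  set bound : ℝ → ℝ := (Icc A B).indicator (fun _ => (1:ℝ)) with hbound
  have hDabs : ∀ m t, |hoeffCDF m (ecdf n x) t - ecdf n x t| ≤ 1 := by
    intro m t
    rw [abs_le]
    constructor
    · have := hoeff_nonneg m (ecdf n x) t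
      have := ecdf_le_one n x hn t
      linarith
    · have := hoeff_le_one m (ecdf n x) t
      have := ecdf_nonneg n x hn t
      linarith
  have hcontp : Continuous (fun y : ℝ => y ^ p) :=
    Real.continuous_rpow_const (le_of_lt hp0)
  have hmeas : ∀ m : ℕ, AEStronglyMeasurable
      (fun t : ℝ => |hoeffCDF (m+1) (ecdf n x) t - ecdf n x t| ^ p) volume := by
    intro m
    apply Measurable.aestronglyMeasurable
    exact hcontp.measurable.comp
      (((hoeff_mono (m+1) (ecdf n x)).measurable.sub (ecdf_mono n x hn).measurable).abs)
  have hbint : Integrable bound := by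
    rw [hbound]
    exact (integrableOn_const (C := (1:ℝ)) measure_Icc_lt_top.ne).integrable_indicator
      measurableSet_Icc
  have hb : ∀ m : ℕ, ∀ᵐ t : ℝ, ‖|hoeffCDF (m+1) (ecdf n x) t - ecdf n x t| ^ p‖ ≤ bound t := by
    intro m
    filter_upwards with t
    rw [Real.norm_eq_abs, abs_of_nonneg (Real.rpow_nonneg (abs_nonneg _) p)]
    by_cases hmem : t ∈ Icc A B
    · rw [hbound, indicator_of_mem hmem]
      exact Real.rpow_le_one (abs_nonneg _) (hDabs _ t) (le_of_lt hp0)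
    · rw [hbound, indicator_of_notMem hmem]
      rw [mem_Icc, not_and_or] at hmem
      have hD0 : hoeffCDF (m+1) (ecdf n x) t - ecdf n x t = 0 := by
        rcases hmem with h | h
        · push_neg at h
          rw [hoeff_ecdf_zero n x hn (m+1) h, ecdf_eq_zero n x hn h, sub_self]
        · push_neg at h
          rw [hoeff_ecdf_one n x hn (m+1) (by omega) (le_of_lt h),
            ecdf_eq_one n x hn (le_of_lt h), sub_self]
      rw [hD0, abs_zero, Real.zero_rpow (ne_of_gt hp0)]
  have hlim : ∀ᵐ t : ℝ, Tendsto
      (fun m : ℕ => |hoeffCDF (m+1) (ecdf n x) t - ecdf n x t| ^ p) atTop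
      (nhds ((fun _ : ℝ => (0:ℝ)) t)) := by
    have hz : ∀ᵐ t : ℝ, t ∉ Set.range x :=
      (Set.countable_range x).ae_notMem _
    filter_upwards [hz] with t htz
    have ht : ∀ i < n, x i ≠ t := fun i _ hxi => htz ⟨i, hxi⟩
    have h1 : Tendsto (fun m : ℕ => hoeffCDF m (ecdf n x) t - ecdf n x t)
        atTop (nhds 0) := by
      have := (hoeff_pointwise n x hn t ht).sub_const (ecdf n x t)
      simpa using this
    have h2 : Tendsto (fun m : ℕ => hoeffCDF (m+1) (ecdf n x) t - ecdf n x t)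
        atTop (nhds 0) := h1.comp (tendsto_add_atTop_nat 1)
    have h3 : Tendsto (fun m : ℕ => |hoeffCDF (m+1) (ecdf n x) t - ecdf n x t|)
        atTop (nhds 0) := by simpa using h2.abs
    have h4 := (hcontp.tendsto 0).comp h3
    rw [Real.zero_rpow (ne_of_gt hp0)] at h4
    exact h4
  have main := MeasureTheory.tendsto_integral_of_dominated_convergence
    (F := fun (m : ℕ) (t : ℝ) => |hoeffCDF (m+1) (ecdf n x) t - ecdf n x t| ^ p)
    (f := fun _ : ℝ => (0:ℝ)) (bound := bound) hmeas hbint hb hlim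
  simpa using main

end ECDF

/-- For a fixed sample, `H_m(𝔽_n) → 𝔽_n` pointwise off the sample points,
and in every `L^p` norm, as `m → ∞`. -/
theorem hoeffCDF_ecdf_tendsto
    (n : ℕ) (hn : 0 < n) (x : ℕ → ℝ) :
    (∀ t : ℝ, (∀ i < n, x i ≠ t) →
      Tendsto (fun m : ℕ => hoeffCDF m (ecdf n x) t) atTop (nhds (ecdf n x t))) ∧
    (∀ p : ℝ, 1 ≤ p →
      Tendsto (fun m : ℕ => ∫ t : ℝ, |hoeffCDF m (ecdf n x) t - ecdf n x t| ^ p)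
        atTop (nhds 0)) := by
  exact ⟨fun t ht => hoeff_pointwise n x hn t ht, fun p hp => hoeff_lp n x hn p hp⟩
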